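/- For all 0 ≤ t < t', ∫₀ᵗ [ (s(t−s))^{-1/2} + (s(t'−s))^{-1/2} − 2(s((t+t')/2 − s))^{-1/2} ] ds (in absolute value of the integrand pointwise) is at most π − 2 arctan(√(t/(t'−t))), using ∫₀ᵗ (s(t'−s))^{-1/2} ds = 2 arctan(√(t/(t'−t))). -/

import Mathlib

open Real intervalIntegral MeasureTheory Set

lemma myIntegrable {T a : ℝ} (ha : 0 ≤ a) (haT : a < T) :
    IntervalIntegrable (fun s => 1 / Real.sqrt (s * (T - s))) volume 0 a := by
  have hbase : IntervalIntegrable (fun s : ℝ => (Real.sqrt (T - a))⁻¹ * s ^ (-(1/2) : ℝ))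
      volume 0 a := (intervalIntegrable_rpow' (by norm_num)).const_mul _
  have hm : Measurable fun s : ℝ => 1 / Real.sqrt (s * (T - s)) :=
    measurable_const.div ((measurable_id.mul (measurable_const.sub measurable_id)).sqrt)
  refine hbase.mono_fun hm.aestronglyMeasurable ?_
  rw [uIoc_of_le ha]
  refine (ae_restrict_iff' measurableSet_Ioc).2 (ae_of_all _ fun s hs => ?_)
  obtain ⟨hs0, hsa⟩ := hs
  have hTa : (0:ℝ) < T - a := by linarith
  have h1 : Real.sqrt (s * (T - s)) = Real.sqrt s * Real.sqrt (T - s) :=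
    Real.sqrt_mul hs0.le _
  have h2 : s ^ (-(1/2) : ℝ) = (Real.sqrt s)⁻¹ := by
    rw [Real.rpow_neg hs0.le, Real.sqrt_eq_rpow]
  have hss : 0 < Real.sqrt s := Real.sqrt_pos.2 hs0
  have hTss : 0 < Real.sqrt (T - a) := Real.sqrt_pos.2 hTa
  have hle : Real.sqrt (T - a) ≤ Real.sqrt (T - s) := Real.sqrt_le_sqrt (by linarith)
  simp only [Real.norm_eq_abs, h1, h2]
  rw [abs_of_nonneg (by positivity), abs_of_nonneg (by positivity), one_div, mul_inv]
  rw [mul_comm ((Real.sqrt (T - a))⁻¹) _]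
  gcongr

lemma myValue {T a : ℝ} (ha : 0 ≤ a) (haT : a < T) :
    ∫ s in (0:ℝ)..a, 1 / Real.sqrt (s * (T - s)) =
      2 * Real.arctan (Real.sqrt (a / (T - a))) := by
  set F : ℝ → ℝ := fun s => 2 * Real.arctan (Real.sqrt (s / (T - s))) with hF
  have hcont : ContinuousOn F (Icc 0 a) := by
    refine ContinuousOn.mul continuousOn_const ?_
    refine (Real.continuous_arctan.comp Real.continuous_sqrt).comp_continuousOn ?_
    refine ContinuousOn.div continuousOn_id (continuous_const.sub continuous_id).continuousOn
      fun s hs => ?_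
    have := hs.2; exact ne_of_gt (by linarith)
  have hderiv : ∀ s ∈ Ioo 0 a, HasDerivWithinAt F (1 / Real.sqrt (s * (T - s))) (Ioi s) s := by
    intro s hs
    obtain ⟨hs0, hsa⟩ := hs
    have hTs : 0 < T - s := by linarith
    have hu : HasDerivAt (fun s : ℝ => s / (T - s)) (T / (T - s) ^ 2) s := by
      have := (hasDerivAt_id s).div ((hasDerivAt_id s).const_sub T) hTs.ne'
      rw [show T / (T - s) ^ 2 = (1 * (T - id s) - id s * -1) / (T - id s) ^ 2 by
        simp only [id]; ring]
      exact this
    have huv : (0:ℝ) < s / (T - s) := by positivity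
    have hsq : HasDerivAt (fun s : ℝ => Real.sqrt (s / (T - s)))
        (1 / (2 * Real.sqrt (s / (T - s))) * (T / (T - s) ^ 2)) s :=
      (Real.hasDerivAt_sqrt huv.ne').comp s hu
    have harc : HasDerivAt F
        (2 * ((1 / (1 + Real.sqrt (s / (T - s)) ^ 2)) *
          (1 / (2 * Real.sqrt (s / (T - s))) * (T / (T - s) ^ 2)))) s :=
      ((Real.hasDerivAt_arctan _).comp s hsq).const_mul 2
    have key : 2 * ((1 / (1 + Real.sqrt (s / (T - s)) ^ 2)) *
          (1 / (2 * Real.sqrt (s / (T - s))) * (T / (T - s) ^ 2))) =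
        1 / Real.sqrt (s * (T - s)) := by
      have h2 : Real.sqrt (s / (T - s)) = Real.sqrt s / Real.sqrt (T - s) :=
        Real.sqrt_div hs0.le _
      have h3 : Real.sqrt (s * (T - s)) = Real.sqrt s * Real.sqrt (T - s) :=
        Real.sqrt_mul hs0.le _
      have hA : 0 < Real.sqrt s := Real.sqrt_pos.2 hs0
      have hB : 0 < Real.sqrt (T - s) := Real.sqrt_pos.2 hTs
      have hA2 : Real.sqrt s ^ 2 = s := Real.sq_sqrt hs0.le
      have hB2 : Real.sqrt (T - s) ^ 2 = T - s := Real.sq_sqrt hTs.le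
      have hX : 1 + Real.sqrt (s / (T - s)) ^ 2 = T / (T - s) := by
        rw [h2, div_pow, hA2, hB2]
        field_simp
        ring
      rw [hX, h2, h3]
      have hT0 : (0:ℝ) < T := by linarith
      field_simp
      linear_combination hB2
    exact (key ▸ harc).hasDerivWithinAt
  have := integral_eq_sub_of_hasDeriv_right_of_le ha hcont hderiv (myIntegrable ha haT)
  rw [this, hF]
  simp

lemma refl_eq {t : ℝ} :
    (fun s : ℝ => 1 / Real.sqrt ((t - s) * (t - (t - s)))) =
      fun s : ℝ => 1 / Real.sqrt (s * (t - s)) := by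
  funext s
  rw [show (t - (t - s)) = s by ring, mul_comm]

lemma myIntegrableSelf {t : ℝ} (ht : 0 < t) :
    IntervalIntegrable (fun s => 1 / Real.sqrt (s * (t - s))) volume 0 t := by
  have h2 : (0:ℝ) ≤ t / 2 := by linarith
  have h2' : t / 2 < t := by linarith
  have left := myIntegrable (T := t) h2 h2'
  have right : IntervalIntegrable (fun s => 1 / Real.sqrt (s * (t - s))) volume (t/2) t := by
    have h := (left.comp_sub_left t).symm
    rw [refl_eq] at h
    rw [show t - t / 2 = t / 2 by ring, show t - (0:ℝ) = t by ring] at h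
    exact h
  exact left.trans right

lemma myValueSelf {t : ℝ} (ht : 0 < t) :
    ∫ s in (0:ℝ)..t, 1 / Real.sqrt (s * (t - s)) = Real.pi := by
  have h2 : (0:ℝ) ≤ t / 2 := by linarith
  have h2' : t / 2 < t := by linarith
  have hhalf := myValue (T := t) h2 h2'
  rw [show t / 2 / (t - t / 2) = 1 by rw [show t - t/2 = t/2 by ring, div_self (by positivity)],
    Real.sqrt_one, Real.arctan_one] at hhalf
  have hrefl : ∫ s in (t/2:ℝ)..t, 1 / Real.sqrt (s * (t - s)) =
      ∫ s in (0:ℝ)..t/2, 1 / Real.sqrt (s * (t - s)) := by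
    have h := intervalIntegral.integral_comp_sub_left (a := t/2) (b := t)
      (fun s => 1 / Real.sqrt (s * (t - s))) t
    rw [refl_eq] at h
    rw [h, show t - t = (0:ℝ) by ring, show t - t / 2 = t / 2 by ring]
  have right : IntervalIntegrable (fun s => 1 / Real.sqrt (s * (t - s))) volume (t/2) t := by
    have h := ((myIntegrable (T := t) h2 h2').comp_sub_left t).symm
    rw [refl_eq] at h
    rw [show t - t / 2 = t / 2 by ring, show t - (0:ℝ) = t by ring] at h
    exact h
  have hsplit := intervalIntegral.integral_add_adjacent_intervals
    (myIntegrable (T := t) h2 h2') right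
  rw [← hsplit, hhalf, hrefl, hhalf]
  ring

theorem stmt_13 (t t' : ℝ) (ht : 0 ≤ t) (htt' : t < t') :
    (∫ s in (0:ℝ)..t, 1 / Real.sqrt (s * (t' - s)) =
      2 * Real.arctan (Real.sqrt (t / (t' - t)))) ∧
    (∫ s in (0:ℝ)..t,
        |1 / Real.sqrt (s * (t - s)) + 1 / Real.sqrt (s * (t' - s)) -
          2 / Real.sqrt (s * ((t + t') / 2 - s))|) ≤
      Real.pi - 2 * Real.arctan (Real.sqrt (t / (t' - t))) := by
  refine ⟨myValue ht htt', ?_⟩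
  rcases eq_or_lt_of_le ht with h0 | h0
  · rw [← h0]
    simp [Real.pi_pos.le]
  have hm : t < (t + t') / 2 := by linarith
  have hf := myIntegrableSelf h0
  have hg := myIntegrable ht htt'
  have hh := (myIntegrable ht hm).const_mul 2
  have hint : IntervalIntegrable (fun s => 1 / Real.sqrt (s * (t - s)) +
      1 / Real.sqrt (s * (t' - s)) - 2 / Real.sqrt (s * ((t + t') / 2 - s))) volume 0 t := by
    have := (hf.add hg).sub hh
    simpa [mul_one_div, div_eq_mul_inv] using this
  have hsub := hf.sub hg
  have hne : ∀ᵐ s : ℝ, s ≠ t := by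
    rw [ae_iff]
    have : {s : ℝ | ¬ s ≠ t} = {t} := by ext s; simp
    rw [this]
    exact measure_singleton t
  have hae : (fun s => |1 / Real.sqrt (s * (t - s)) + 1 / Real.sqrt (s * (t' - s)) -
        2 / Real.sqrt (s * ((t + t') / 2 - s))|) ≤ᵐ[volume.restrict (Icc 0 t)]
      fun s => 1 / Real.sqrt (s * (t - s)) - 1 / Real.sqrt (s * (t' - s)) := by
    filter_upwards [ae_restrict_mem measurableSet_Icc, ae_restrict_of_ae hne] with s hs hsne
    rcases eq_or_lt_of_le hs.1 with hs0 | hs0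
    · simp [← hs0]
    have hst : s < t := lt_of_le_of_ne hs.2 hsne
    have hts : 0 < t - s := by linarith
    have hA : 0 < Real.sqrt (s * (t - s)) := Real.sqrt_pos.2 (by positivity)
    have hC : 0 < Real.sqrt (s * ((t + t') / 2 - s)) := Real.sqrt_pos.2 (by nlinarith)
    have hB : 0 < Real.sqrt (s * (t' - s)) := Real.sqrt_pos.2 (by nlinarith)
    have hAC : Real.sqrt (s * (t - s)) ≤ Real.sqrt (s * ((t + t') / 2 - s)) :=
      Real.sqrt_le_sqrt (by nlinarith)
    have hCB : Real.sqrt (s * ((t + t') / 2 - s)) ≤ Real.sqrt (s * (t' - s)) :=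
      Real.sqrt_le_sqrt (by nlinarith)
    have h1 : 1 / Real.sqrt (s * (t' - s)) ≤ 1 / Real.sqrt (s * ((t + t') / 2 - s)) :=
      one_div_le_one_div_of_le hC hCB
    have h2 : 1 / Real.sqrt (s * ((t + t') / 2 - s)) ≤ 1 / Real.sqrt (s * (t - s)) :=
      one_div_le_one_div_of_le hA hAC
    rw [abs_le]
    constructor
    · have e : 2 / Real.sqrt (s * ((t + t') / 2 - s)) =
        2 * (1 / Real.sqrt (s * ((t + t') / 2 - s))) := by rw [mul_one_div]
      rw [e]; linarith
    · have e : 2 / Real.sqrt (s * ((t + t') / 2 - s)) =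
        2 * (1 / Real.sqrt (s * ((t + t') / 2 - s))) := by rw [mul_one_div]
      rw [e]; linarith
  have hmono := intervalIntegral.integral_mono_ae_restrict ht hint.abs hsub hae
  rw [intervalIntegral.integral_sub hf hg, myValueSelf h0, myValue ht htt'] at hmono
  exact hmono
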